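/- Let U, Y be Banach spaces, G ∈ L(U,Y), S ⊆ L(Y,U) a closed subspace with S ∩ M_G = S (i.e., I - GK invertible for every K ∈ S) and h_G(S) = S. Let W, Z be Banach spaces, P₁₁ ∈ L(W,Z), P₁₂ ∈ L(U,Z), P₂₁ ∈ L(W,Y). Then the set C = { P₁₁ - P₁₂·h_G(K)·P₂₁ : K ∈ S } is an affine subspace of L(W,Z), namely C = P₁₁ - P₁₂·S·P₂₁, and in particular C is convex. -/
import Mathlib


/-- If `S` is a closed subspace with `S ∩ M_G = S` and `h_G(S) = S`, then the
set of achievable closed-loop maps `C = {P₁₁ - P₁₂·h_G(K)·P₂₁ : K ∈ S}` equals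
the affine set `P₁₁ - P₁₂·S·P₂₁`, and in particular `C` is convex. -/
theorem stmt_17 {U Y W Z : Type*}
    [NormedAddCommGroup U] [NormedSpace ℝ U] [CompleteSpace U]
    [NormedAddCommGroup Y] [NormedSpace ℝ Y] [CompleteSpace Y]
    [NormedAddCommGroup W] [NormedSpace ℝ W] [CompleteSpace W]
    [NormedAddCommGroup Z] [NormedSpace ℝ Z] [CompleteSpace Z]
    (G : U →L[ℝ] Y) (S : Submodule ℝ (Y →L[ℝ] U))
    (hSclosed : IsClosed (S : Set (Y →L[ℝ] U)))
    (hSM : ∀ K ∈ S, IsUnit (1 - G ∘L K))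
    (hG : (Y →L[ℝ] U) → (Y →L[ℝ] U))
    (hhG : hG = fun K => -(K ∘L Ring.inverse (1 - G ∘L K)))
    (hinv : hG '' (S : Set (Y →L[ℝ] U)) = (S : Set (Y →L[ℝ] U)))
    (P11 : W →L[ℝ] Z) (P12 : U →L[ℝ] Z) (P21 : W →L[ℝ] Y)
    (C : Set (W →L[ℝ] Z))
    (hC : C = {X | ∃ K ∈ S, X = P11 - (P12 ∘L hG K) ∘L P21}) :
    C = {X | ∃ Q ∈ S, X = P11 - (P12 ∘L Q) ∘L P21} ∧ Convex ℝ C := by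
  have hCeq : C = {X | ∃ Q ∈ S, X = P11 - (P12 ∘L Q) ∘L P21} := by
    rw [hC]
    ext X
    constructor
    · rintro ⟨K, hK, rfl⟩
      have : hG K ∈ (S : Set (Y →L[ℝ] U)) := hinv ▸ Set.mem_image_of_mem hG hK
      exact ⟨hG K, this, rfl⟩
    · rintro ⟨Q, hQ, rfl⟩
      have : Q ∈ hG '' (S : Set (Y →L[ℝ] U)) := hinv.symm ▸ hQ
      obtain ⟨K, hK, rfl⟩ := this
      exact ⟨K, hK, rfl⟩
  refine ⟨hCeq, ?_⟩
  rw [hCeq]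
  rintro X ⟨Q1, hQ1, rfl⟩ X' ⟨Q2, hQ2, rfl⟩ a b ha hb hab
  refine ⟨a • Q1 + b • Q2, S.add_mem (S.smul_mem a hQ1) (S.smul_mem b hQ2), ?_⟩
  ext w
  simp [smul_sub, smul_smul, ← add_smul, hab, smul_add]
  match_scalars <;> linarith
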